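/- arXiv:1010.1906 — 3 statements merged into one kernel-verified Lean document; each statement's English description precedes it below -/
import Mathlib

section
/- Let H be a complex Hilbert space, let S, A : H → H be bounded linear operators with S symmetric (⟨Sx, y⟩ = ⟨x, Sy⟩ for all x, y ∈ H) and A skew-symmetric (⟨Ax, y⟩ = −⟨x, Ay⟩ for all x, y ∈ H), and let T₀ < T₁ be real numbers. Then for every continuously differentiable function f : [T₀, T₁] → H one has ∫_{T₀}^{T₁} ( Re⟨(SA − AS)f(t), f(t)⟩ + ‖Sf(t)‖² ) dt ≤ ∫_{T₀}^{T₁} ‖f′(t) − Sf(t) − Af(t)‖² dt + |⟨Sf(T₁), f(T₁)⟩| + |⟨Sf(T₀), f(T₀)⟩|. -/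
open scoped InnerProductSpace

/-- Pointwise inequality used in STATEMENT 13. -/
lemma statement13_pointwise {H : Type*} [NormedAddCommGroup H] [InnerProductSpace ℂ H]
    (S A : H →L[ℂ] H)
    (hS : ∀ x y : H, ⟪S x, y⟫_ℂ = ⟪x, S y⟫_ℂ)
    (hA : ∀ x y : H, ⟪A x, y⟫_ℂ = -⟪x, A y⟫_ℂ)
    (x v : H) :
    (⟪S (A x) - A (S x), x⟫_ℂ).re + ‖S x‖^2
      ≤ ‖v - S x - A x‖^2 + 2 * (⟪S x, v⟫_ℂ).re := by
  have hresymm : ∀ a b : H, (⟪a, b⟫_ℂ).re = (⟪b, a⟫_ℂ).re := by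
    intro a b
    rw [← inner_conj_symm a b, Complex.conj_re]
  have h1 : (⟪S (A x) - A (S x), x⟫_ℂ).re = 2 * (⟪A x, S x⟫_ℂ).re := by
    rw [inner_sub_left, Complex.sub_re, hS (A x) x, hA (S x) x]
    rw [Complex.neg_re, hresymm (S x) (A x)]
    ring
  have h2 : v - S x - A x = (v - A x) - S x := by abel
  have h3 : ‖(v - A x) - S x‖^2 = ‖v - A x‖^2 - 2 * (⟪v - A x, S x⟫_ℂ).re + ‖S x‖^2 := by
    have := norm_sub_sq (𝕜 := ℂ) (v - A x) (S x)
    simpa only [RCLike.re_to_complex] using this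
  have h4 : (⟪v - A x, S x⟫_ℂ).re = (⟪v, S x⟫_ℂ).re - (⟪A x, S x⟫_ℂ).re := by
    rw [inner_sub_left, Complex.sub_re]
  have h5 : (⟪S x, v⟫_ℂ).re = (⟪v, S x⟫_ℂ).re := hresymm _ _
  rw [h1, h2, h3, h4, h5]
  nlinarith [sq_nonneg ‖v - A x‖]

theorem statement13 {H : Type*} [NormedAddCommGroup H] [InnerProductSpace ℂ H]
    [CompleteSpace H] (S A : H →L[ℂ] H)
    (hS : ∀ x y : H, ⟪S x, y⟫_ℂ = ⟪x, S y⟫_ℂ)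
    (hA : ∀ x y : H, ⟪A x, y⟫_ℂ = -⟪x, A y⟫_ℂ)
    (T₀ T₁ : ℝ) (hT : T₀ < T₁) (f f' : ℝ → H)
    (hf : ∀ t ∈ Set.Icc T₀ T₁, HasDerivWithinAt f (f' t) (Set.Icc T₀ T₁) t)
    (hf' : ContinuousOn f' (Set.Icc T₀ T₁)) :
    (∫ t in T₀..T₁, ((⟪S (A (f t)) - A (S (f t)), f t⟫_ℂ).re + ‖S (f t)‖^2))
      ≤ (∫ t in T₀..T₁, ‖f' t - S (f t) - A (f t)‖^2)
        + ‖⟪S (f T₁), f T₁⟫_ℂ‖ + ‖⟪S (f T₀), f T₀⟫_ℂ‖ := by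
  set I := Set.Icc T₀ T₁ with hI
  have hT' : T₀ ≤ T₁ := hT.le
  have huIcc : Set.uIcc T₀ T₁ = I := Set.uIcc_of_le hT'
  have hfc : ContinuousOn f I := fun t ht => (hf t ht).continuousWithinAt
  -- derivative of S ∘ f
  have hSf : ∀ t ∈ I, HasDerivWithinAt (fun u => S (f u)) (S (f' t)) I t := by
    intro t ht
    exact (S.restrictScalars ℝ).hasFDerivAt.comp_hasDerivWithinAt t (hf t ht)
  -- derivative of φ := re ⟪S f, f⟫
  set φ : ℝ → ℝ := fun t => (⟪S (f t), f t⟫_ℂ).re with hφdef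
  set φd : ℝ → ℝ := fun t => 2 * (⟪S (f t), f' t⟫_ℂ).re with hφddef
  have hresymm : ∀ a b : H, (⟪a, b⟫_ℂ).re = (⟪b, a⟫_ℂ).re := by
    intro a b
    rw [← inner_conj_symm a b, Complex.conj_re]
  have hφderiv : ∀ t ∈ I, HasDerivWithinAt φ (φd t) I t := by
    intro t ht
    have h1 : HasDerivWithinAt (fun u => ⟪S (f u), f u⟫_ℂ)
        (⟪S (f t), f' t⟫_ℂ + ⟪S (f' t), f t⟫_ℂ) I t :=
      (hSf t ht).inner ℂ (hf t ht)
    have h2 := Complex.reCLM.hasFDerivAt.comp_hasDerivWithinAt t h1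
    have h3 : Complex.reCLM (⟪S (f t), f' t⟫_ℂ + ⟪S (f' t), f t⟫_ℂ) = φd t := by
      simp only [Complex.reCLM_apply, Complex.add_re, hφddef]
      rw [hS (f' t) (f t), hresymm (f' t) (S (f t))]
      ring
    rw [h3] at h2
    exact h2
  have hφcont : ContinuousOn φ I := fun t ht => (hφderiv t ht).continuousWithinAt
  have hSfc : ContinuousOn (fun t => S (f t)) I := S.continuous.comp_continuousOn hfc
  have hφdcont : ContinuousOn φd I := by
    apply ContinuousOn.mul continuousOn_const
    exact Complex.continuous_re.comp_continuousOn (hSfc.inner hf')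
  -- FTC
  have hFTC : (∫ t in T₀..T₁, φd t) = φ T₁ - φ T₀ := by
    apply intervalIntegral.integral_eq_sub_of_hasDeriv_right_of_le hT' hφcont
    · intro t ht
      have htI : t ∈ I := Set.Ioo_subset_Icc_self ht
      exact ((hφderiv t htI).hasDerivAt (Icc_mem_nhds ht.1 ht.2)).hasDerivWithinAt
    · exact (hφdcont.mono (huIcc ▸ Set.Subset.refl _)).intervalIntegrable
  -- integrands are integrable
  have hLc : ContinuousOn (fun t => (⟪S (A (f t)) - A (S (f t)), f t⟫_ℂ).re + ‖S (f t)‖^2) I := by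
    apply ContinuousOn.add
    · exact Complex.continuous_re.comp_continuousOn
        (((S.continuous.comp A.continuous).comp_continuousOn hfc |>.sub
          ((A.continuous.comp S.continuous).comp_continuousOn hfc)).inner hfc)
    · exact (hSfc.norm).pow 2
  have hGc : ContinuousOn (fun t => ‖f' t - S (f t) - A (f t)‖^2) I := by
    exact (((hf'.sub hSfc).sub (A.continuous.comp_continuousOn hfc)).norm).pow 2
  have hLint : IntervalIntegrable
      (fun t => (⟪S (A (f t)) - A (S (f t)), f t⟫_ℂ).re + ‖S (f t)‖^2) MeasureTheory.volume T₀ T₁ :=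
    (hLc.mono (huIcc ▸ Set.Subset.refl _)).intervalIntegrable
  have hGint : IntervalIntegrable (fun t => ‖f' t - S (f t) - A (f t)‖^2)
      MeasureTheory.volume T₀ T₁ :=
    (hGc.mono (huIcc ▸ Set.Subset.refl _)).intervalIntegrable
  have hφdint : IntervalIntegrable φd MeasureTheory.volume T₀ T₁ :=
    (hφdcont.mono (huIcc ▸ Set.Subset.refl _)).intervalIntegrable
  -- pointwise bound and integral monotonicity
  have hmono : (∫ t in T₀..T₁, ((⟪S (A (f t)) - A (S (f t)), f t⟫_ℂ).re + ‖S (f t)‖^2))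
      ≤ ∫ t in T₀..T₁, (‖f' t - S (f t) - A (f t)‖^2 + φd t) := by
    apply intervalIntegral.integral_mono_on hT' hLint (hGint.add hφdint)
    intro t ht
    exact statement13_pointwise S A hS hA (f t) (f' t)
  have hsplit : (∫ t in T₀..T₁, (‖f' t - S (f t) - A (f t)‖^2 + φd t))
      = (∫ t in T₀..T₁, ‖f' t - S (f t) - A (f t)‖^2) + (φ T₁ - φ T₀) := by
    rw [intervalIntegral.integral_add hGint hφdint, hFTC]
  have habs : φ T₁ - φ T₀ ≤ ‖⟪S (f T₁), f T₁⟫_ℂ‖ + ‖⟪S (f T₀), f T₀⟫_ℂ‖ := by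
    have h1 : φ T₁ ≤ ‖⟪S (f T₁), f T₁⟫_ℂ‖ :=
      (Complex.re_le_norm _)
    have h2 : -φ T₀ ≤ ‖⟪S (f T₀), f T₀⟫_ℂ‖ := by
      have := Complex.abs_re_le_norm ⟪S (f T₀), f T₀⟫_ℂ
      have := neg_abs_le (⟪S (f T₀), f T₀⟫_ℂ).re
      simp only [hφdef]
      linarith
    linarith
  calc (∫ t in T₀..T₁, ((⟪S (A (f t)) - A (S (f t)), f t⟫_ℂ).re + ‖S (f t)‖^2))
      ≤ (∫ t in T₀..T₁, ‖f' t - S (f t) - A (f t)‖^2) + (φ T₁ - φ T₀) := by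
        rw [← hsplit]; exact hmono
    _ ≤ (∫ t in T₀..T₁, ‖f' t - S (f t) - A (f t)‖^2)
        + ‖⟪S (f T₁), f T₁⟫_ℂ‖ + ‖⟪S (f T₀), f T₀⟫_ℂ‖ := by
        linarith
end

section
/- For every p ∈ (1, 4/3] there exist β ∈ ℝ, M > 0 and a four times continuously differentiable function φ : [0,∞) → ℝ such that: φ(r) = r^p + β for all r ≥ 1; φ(0) = 0 and φ′(0) = 0; φ(r) > 0 and φ′(r) > 0 for all r > 0; φ″(r) > 0 for all r ≥ 0; and φ(r) ≤ M r^p for all r ≥ 0. -/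
open Set

noncomputable def st18nu (p : ℝ) : ℝ :=
  4*(p*(p-1) - p*(p-1)*(p-2)/2 + p*(p-1)*(p-2)*(p-3)/6 - p)
noncomputable def st18c0 (p : ℝ) : ℝ :=
  p*(p-1) - p*(p-1)*(p-2) + p*(p-1)*(p-2)*(p-3)/2 - st18nu p
noncomputable def st18c1 (p : ℝ) : ℝ :=
  p*(p-1)*(p-2) - p*(p-1)*(p-2)*(p-3) + 3*st18nu p
noncomputable def st18c2 (p : ℝ) : ℝ := p*(p-1)*(p-2)*(p-3)/2 - 3*st18nu p
noncomputable def st18c3 (p : ℝ) : ℝ := st18nu p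

noncomputable def st18q (p r : ℝ) : ℝ :=
  st18c0 p * r^2/2 + st18c1 p * r^3/6 + st18c2 p * r^4/12 + st18c3 p * r^5/20
noncomputable def st18H (p r : ℝ) : ℝ :=
  st18c0 p * r + st18c1 p * r^2/2 + st18c2 p * r^3/3 + st18c3 p * r^4/4
noncomputable def st18h (p r : ℝ) : ℝ :=
  st18c0 p + st18c1 p * r + st18c2 p * r^2 + st18c3 p * r^3
noncomputable def st18h1 (p r : ℝ) : ℝ := st18c1 p + 2*st18c2 p * r + 3*st18c3 p * r^2
noncomputable def st18h2 (p r : ℝ) : ℝ := 2*st18c2 p + 6*st18c3 p * r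

lemma st18nu_nonpos {p : ℝ} (hp1 : 1 < p) (hp2 : p ≤ 4/3) : st18nu p ≤ 0 := by
  simp only [st18nu]
  nlinarith [sq_nonneg (p-1), sq_nonneg (p - 4/3), mul_pos (by linarith : (0:ℝ) < p - 1) (by linarith : (0:ℝ) < 4/3 - p + 1)]

lemma st18h_pos {p : ℝ} (hp1 : 1 < p) (hp2 : p ≤ 4/3) {r : ℝ} (hr0 : 0 ≤ r) (hr1 : r ≤ 1) :
    0 < st18h p r := by
  have key : st18h p r = p*(p-1) + p*(p-1)*(p-2)*(r-1) + (p*(p-1)*(p-2)*(p-3)/2)*(r-1)^2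
      + st18nu p * (r-1)^3 := by
    simp only [st18h, st18c0, st18c1, st18c2, st18c3]; ring
  have hA : 0 < p*(p-1) := by nlinarith
  have t1 : 0 ≤ p*(p-1)*(p-2)*(r-1) := by nlinarith [mul_nonneg (mul_nonneg hA.le (by linarith : (0:ℝ) ≤ 2-p)) (by linarith : (0:ℝ) ≤ 1-r)]
  have t2 : 0 ≤ (p*(p-1)*(p-2)*(p-3)/2)*(r-1)^2 := by nlinarith [sq_nonneg (r-1)]
  have t3 : 0 ≤ st18nu p * (r-1)^3 := by
    have h1 := st18nu_nonpos hp1 hp2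
    have h2 : (r-1)^3 ≤ 0 := by nlinarith [sq_nonneg (r-1)]
    nlinarith [mul_nonneg (neg_nonneg.mpr h1) (neg_nonneg.mpr h2)]
  rw [key]; linarith

lemma st18H_one {p : ℝ} : st18H p 1 = p := by
  simp only [st18H, st18c0, st18c1, st18c2, st18c3, st18nu]; ring
lemma st18h_one {p : ℝ} : st18h p 1 = p*(p-1) := by
  simp only [st18h, st18c0, st18c1, st18c2, st18c3]; ring
lemma st18h1_one {p : ℝ} : st18h1 p 1 = p*(p-1)*(p-2) := by
  simp only [st18h1, st18c0, st18c1, st18c2, st18c3]; ring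
lemma st18h2_one {p : ℝ} : st18h2 p 1 = p*(p-1)*(p-2)*(p-3) := by
  simp only [st18h2, st18c0, st18c1, st18c2, st18c3]; ring

lemma poly5_hasDerivAt (a0 a1 a2 a3 a4 a5 x : ℝ) :
    HasDerivAt (fun r : ℝ => a0 + a1*r + a2*r^2 + a3*r^3 + a4*r^4 + a5*r^5)
      (a1 + 2*a2*x + 3*a3*x^2 + 4*a4*x^3 + 5*a5*x^4) x := by
  have h : HasDerivAt (fun r : ℝ => a0 + a1*r^1 + a2*r^2 + a3*r^3 + a4*r^4 + a5*r^5)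
      (0 + a1*(1*x^(1-1)) + a2*(2*x^(2-1)) + a3*(3*x^(3-1)) + a4*(4*x^(4-1)) + a5*(5*x^(5-1))) x := by
    exact_mod_cast ((((((hasDerivAt_const x a0).add ((hasDerivAt_pow 1 x).const_mul a1)).add
      ((hasDerivAt_pow 2 x).const_mul a2)).add ((hasDerivAt_pow 3 x).const_mul a3)).add
      ((hasDerivAt_pow 4 x).const_mul a4)).add ((hasDerivAt_pow 5 x).const_mul a5))
  convert h using 2 <;> ring

lemma st18q_deriv (p x : ℝ) : HasDerivAt (st18q p) (st18H p x) x := by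
  have h := poly5_hasDerivAt 0 0 (st18c0 p/2) (st18c1 p/6) (st18c2 p/12) (st18c3 p/20) x
  convert h using 1
  · funext r; simp only [st18q]; ring
  · simp only [st18H]; ring

lemma st18H_deriv (p x : ℝ) : HasDerivAt (st18H p) (st18h p x) x := by
  have h := poly5_hasDerivAt 0 (st18c0 p) (st18c1 p/2) (st18c2 p/3) (st18c3 p/4) 0 x
  convert h using 1
  · funext r; simp only [st18H]; ring
  · simp only [st18h]; ring

lemma st18h_deriv (p x : ℝ) : HasDerivAt (st18h p) (st18h1 p x) x := by
  have h := poly5_hasDerivAt (st18c0 p) (st18c1 p) (st18c2 p) (st18c3 p) 0 0 x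
  convert h using 1
  · funext r; simp only [st18h]; ring
  · simp only [st18h1]; ring

lemma st18h1_deriv (p x : ℝ) : HasDerivAt (st18h1 p) (st18h2 p x) x := by
  have h := poly5_hasDerivAt (st18c1 p) (2*st18c2 p) (3*st18c3 p) 0 0 0 x
  convert h using 1
  · funext r; simp only [st18h1]; ring
  · simp only [st18h2]; ring

lemma st18H_pos {p : ℝ} (hp1 : 1 < p) (hp2 : p ≤ 4/3) {r : ℝ} (hr0 : 0 < r) (hr1 : r ≤ 1) :
    0 < st18H p r := by
  have mono : StrictMonoOn (st18H p) (Icc 0 1) := by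
    refine strictMonoOn_of_deriv_pos (convex_Icc 0 1) ?_ ?_
    · exact Continuous.continuousOn (by unfold st18H; fun_prop)
    · intro x hx
      rw [interior_Icc] at hx
      rw [(st18H_deriv p x).deriv]
      exact st18h_pos hp1 hp2 hx.1.le hx.2.le
  have h0 : st18H p 0 = 0 := by simp [st18H]
  have := mono (left_mem_Icc.mpr zero_le_one) ⟨hr0.le, hr1⟩ hr0
  rwa [h0] at this

lemma st18q_pos {p : ℝ} (hp1 : 1 < p) (hp2 : p ≤ 4/3) {r : ℝ} (hr0 : 0 < r) (hr1 : r ≤ 1) :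
    0 < st18q p r := by
  have mono : StrictMonoOn (st18q p) (Icc 0 1) := by
    refine strictMonoOn_of_deriv_pos (convex_Icc 0 1) ?_ ?_
    · exact Continuous.continuousOn (by unfold st18q; fun_prop)
    · intro x hx
      rw [interior_Icc] at hx
      rw [(st18q_deriv p x).deriv]
      exact st18H_pos hp1 hp2 hx.1 hx.2.le
  have h0 : st18q p 0 = 0 := by simp [st18q]
  have := mono (left_mem_Icc.mpr zero_le_one) ⟨hr0.le, hr1⟩ hr0
  rwa [h0] at this

-- generic quintic derivative

-- piecewise derivative lemma
lemma piecewise_hasDerivWithinAt {f g f' g' : ℝ → ℝ}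
    (hf : ∀ x : ℝ, HasDerivAt f (f' x) x) (hg : ∀ x : ℝ, 0 < x → HasDerivAt g (g' x) x)
    (heq : f 1 = g 1) (heq' : f' 1 = g' 1) (r : ℝ) :
    HasDerivWithinAt (fun x => if x ≤ 1 then f x else g x)
      (if r ≤ 1 then f' r else g' r) (Ici 0) r := by
  rcases lt_trichotomy r 1 with hr | hr | hr
  · rw [if_pos hr.le]
    have hev : (fun x => if x ≤ 1 then f x else g x) =ᶠ[nhds r] f := by
      filter_upwards [Iio_mem_nhds hr] with x hx
      exact if_pos (le_of_lt hx)
    exact ((hf r).congr_of_eventuallyEq hev).hasDerivWithinAt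
  · subst hr
    rw [if_pos le_rfl]
    have h1 : HasDerivWithinAt (fun x => if x ≤ 1 then f x else g x) (f' 1) (Iic 1) 1 :=
      (hf 1).hasDerivWithinAt.congr (fun x hx => if_pos (hx : x ≤ 1)) (by simp)
    have h2 : HasDerivWithinAt (fun x => if x ≤ 1 then f x else g x) (f' 1) (Ici 1) 1 := by
      rw [heq']
      refine ((hg 1 one_pos).hasDerivWithinAt).congr (fun x hx => ?_) (by simp [heq])
      rcases eq_or_lt_of_le (mem_Ici.mp hx) with h | h
      · simp [← h, heq]
      · exact if_neg (not_le.mpr h)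
    have := h1.union h2
    rw [Iic_union_Ici] at this
    exact (this.hasDerivAt (by simp)).hasDerivWithinAt
  · rw [if_neg (not_le.mpr hr)]
    have hev : (fun x => if x ≤ 1 then f x else g x) =ᶠ[nhds r] g := by
      filter_upwards [Ioi_mem_nhds hr] with x hx
      exact if_neg (not_le.mpr hx)
    exact ((hg r (by linarith)).congr_of_eventuallyEq hev).hasDerivWithinAt

-- piecewise continuity
lemma piecewise_continuousOn {f g : ℝ → ℝ} (hf : Continuous f)
    (hg : ∀ x : ℝ, 0 < x → ContinuousAt g x) (heq : f 1 = g 1) :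
    ContinuousOn (fun x => if x ≤ 1 then f x else g x) (Ici 0) := by
  intro r _
  rcases lt_trichotomy r 1 with hr | hr | hr
  · have hev : (fun x => if x ≤ 1 then f x else g x) =ᶠ[nhds r] f := by
      filter_upwards [Iio_mem_nhds hr] with x hx
      exact if_pos (le_of_lt hx)
    exact (hf.continuousAt.congr hev.symm).continuousWithinAt
  · subst hr
    have h1 : ContinuousWithinAt (fun x => if x ≤ 1 then f x else g x) (Iic 1) 1 :=
      (hf.continuousAt.continuousWithinAt).congr (fun x hx => if_pos hx) (if_pos le_rfl)
    have h2 : ContinuousWithinAt (fun x => if x ≤ 1 then f x else g x) (Ici 1) 1 := by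
      refine ((hg 1 one_pos).continuousWithinAt).congr (fun x hx => ?_) (by simp [heq])
      rcases eq_or_lt_of_le (mem_Ici.mp hx) with h | h
      · simp [← h, heq]
      · exact if_neg (not_le.mpr h)
    have := h1.union h2
    rw [Iic_union_Ici] at this
    exact this.mono (subset_univ _)
  · have hev : (fun x => if x ≤ 1 then f x else g x) =ᶠ[nhds r] g := by
      filter_upwards [Ioi_mem_nhds hr] with x hx
      exact if_neg (not_le.mpr hx)
    exact ((hg r (by linarith)).congr hev.symm).continuousWithinAt


/-- existence of the convex Carleman weight equal to `r^p + β` for `r ≥ 1`. -/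
theorem statement18 (p : ℝ) (hp1 : 1 < p) (hp2 : p ≤ 4/3) :
    ∃ (β M : ℝ) (φ : ℝ → ℝ), 0 < M ∧
      -- φ is four times continuously differentiable on [0,∞)
      ContDiffOn ℝ 4 φ (Set.Ici 0) ∧
      -- φ(r) = r^p + β for r ≥ 1
      (∀ r : ℝ, 1 ≤ r → φ r = r ^ p + β) ∧
      -- φ(0) = 0 and φ′(0) = 0 (one-sided derivative at 0)
      φ 0 = 0 ∧ derivWithin φ (Set.Ici 0) 0 = 0 ∧
      -- φ(r) > 0 and φ′(r) > 0 for r > 0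
      (∀ r : ℝ, 0 < r → 0 < φ r) ∧
      (∀ r : ℝ, 0 < r → 0 < derivWithin φ (Set.Ici 0) r) ∧
      -- φ″(r) > 0 for r ≥ 0
      (∀ r : ℝ, 0 ≤ r → 0 < derivWithin (derivWithin φ (Set.Ici 0)) (Set.Ici 0) r) ∧
      -- φ(r) ≤ M r^p for r ≥ 0
      (∀ r : ℝ, 0 ≤ r → φ r ≤ M * r ^ p) := by
  have hp0 : 0 < p := by linarith
  set β : ℝ := st18q p 1 - 1 with hβ
  set M : ℝ := 1 + |β| + |st18c0 p| + |st18c1 p| + |st18c2 p| + |st18c3 p| with hM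
  set φ : ℝ → ℝ := fun x => if x ≤ 1 then st18q p x else x ^ p + β with hφ
  set Φ1 : ℝ → ℝ := fun x => if x ≤ 1 then st18H p x else p * x ^ (p-1) with hΦ1
  set Φ2 : ℝ → ℝ := fun x => if x ≤ 1 then st18h p x else p*(p-1) * x ^ (p-2) with hΦ2
  set Φ3 : ℝ → ℝ := fun x => if x ≤ 1 then st18h1 p x else p*(p-1)*(p-2) * x ^ (p-3) with hΦ3
  set Φ4 : ℝ → ℝ := fun x => if x ≤ 1 then st18h2 p x else p*(p-1)*(p-2)*(p-3) * x ^ (p-4) with hΦ4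
  -- derivative facts
  have D0 : ∀ r : ℝ, HasDerivWithinAt φ (Φ1 r) (Ici 0) r := by
    intro r
    simp only [hφ, hΦ1]
    refine piecewise_hasDerivWithinAt (g := fun x => x ^ p + β) (g' := fun x => p * x ^ (p-1)) (st18q_deriv p) (fun x hx => ?_) ?_ ?_ r
    · exact (Real.hasDerivAt_rpow_const (Or.inl hx.ne')).add_const β
    · beta_reduce; rw [Real.one_rpow]; simp [hβ]
    · beta_reduce; rw [st18H_one, Real.one_rpow, mul_one]
  have D1 : ∀ r : ℝ, HasDerivWithinAt Φ1 (Φ2 r) (Ici 0) r := by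
    intro r
    simp only [hΦ1, hΦ2]
    refine piecewise_hasDerivWithinAt (g := fun x => p * x ^ (p-1)) (g' := fun x => p*(p-1) * x ^ (p-2)) (st18H_deriv p) (fun x hx => ?_) ?_ ?_ r
    · have h := (Real.hasDerivAt_rpow_const (x := x) (p := p-1) (Or.inl hx.ne')).const_mul p
      refine h.congr_deriv ?_
      rw [show p-1-1 = p-2 by ring]; ring
    · beta_reduce; rw [st18H_one, Real.one_rpow, mul_one]
    · beta_reduce; rw [st18h_one, Real.one_rpow, mul_one]
  have D2 : ∀ r : ℝ, HasDerivWithinAt Φ2 (Φ3 r) (Ici 0) r := by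
    intro r
    simp only [hΦ2, hΦ3]
    refine piecewise_hasDerivWithinAt (g := fun x => p*(p-1) * x ^ (p-2)) (g' := fun x => p*(p-1)*(p-2) * x ^ (p-3)) (st18h_deriv p) (fun x hx => ?_) ?_ ?_ r
    · have h := (Real.hasDerivAt_rpow_const (x := x) (p := p-2) (Or.inl hx.ne')).const_mul (p*(p-1))
      refine h.congr_deriv ?_
      rw [show p-2-1 = p-3 by ring]; ring
    · beta_reduce; rw [st18h_one, Real.one_rpow, mul_one]
    · beta_reduce; rw [st18h1_one, Real.one_rpow, mul_one]
  have D3 : ∀ r : ℝ, HasDerivWithinAt Φ3 (Φ4 r) (Ici 0) r := by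
    intro r
    simp only [hΦ3, hΦ4]
    refine piecewise_hasDerivWithinAt (g := fun x => p*(p-1)*(p-2) * x ^ (p-3)) (g' := fun x => p*(p-1)*(p-2)*(p-3) * x ^ (p-4)) (st18h1_deriv p) (fun x hx => ?_) ?_ ?_ r
    · have h := (Real.hasDerivAt_rpow_const (x := x) (p := p-3) (Or.inl hx.ne')).const_mul (p*(p-1)*(p-2))
      refine h.congr_deriv ?_
      rw [show p-3-1 = p-4 by ring]; ring
    · beta_reduce; rw [st18h1_one, Real.one_rpow, mul_one]
    · beta_reduce; rw [st18h2_one, Real.one_rpow, mul_one]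
  have hu : UniqueDiffOn ℝ (Ici (0:ℝ)) := uniqueDiffOn_Ici 0
  have hd1 : ∀ r ∈ Ici (0:ℝ), derivWithin φ (Ici 0) r = Φ1 r :=
    fun r hr => (D0 r).derivWithin (hu r hr)
  have hd2 : ∀ r ∈ Ici (0:ℝ), derivWithin (derivWithin φ (Ici 0)) (Ici 0) r = Φ2 r := by
    intro r hr
    rw [derivWithin_congr hd1 (hd1 r hr)]
    exact (D1 r).derivWithin (hu r hr)
  -- ContDiffOn
  have cont4 : ContinuousOn Φ4 (Ici 0) := by
    refine piecewise_continuousOn ?_ (fun x hx => ?_) ?_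
    · unfold st18h2; fun_prop
    · exact continuousAt_const.mul (Real.continuousAt_rpow_const x (p-4) (Or.inl hx.ne'))
    · beta_reduce; rw [st18h2_one, Real.one_rpow, mul_one]
  have hcd : ContDiffOn ℝ 4 φ (Ici 0) := by
    rw [show (4 : WithTop ℕ∞) = 3 + 1 from by norm_num, contDiffOn_succ_iff_derivWithin hu]
    refine ⟨fun r hr => (D0 r).differentiableWithinAt, by simp, ?_⟩
    refine ContDiffOn.congr ?_ hd1
    rw [show (3 : WithTop ℕ∞) = 2 + 1 from by norm_num, contDiffOn_succ_iff_derivWithin hu]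
    refine ⟨fun r hr => (D1 r).differentiableWithinAt, by simp, ?_⟩
    refine ContDiffOn.congr ?_ (fun r hr => (D1 r).derivWithin (hu r hr))
    rw [show (2 : WithTop ℕ∞) = 1 + 1 from by norm_num, contDiffOn_succ_iff_derivWithin hu]
    refine ⟨fun r hr => (D2 r).differentiableWithinAt, by simp, ?_⟩
    refine ContDiffOn.congr ?_ (fun r hr => (D2 r).derivWithin (hu r hr))
    rw [show (1 : WithTop ℕ∞) = 0 + 1 from by norm_num, contDiffOn_succ_iff_derivWithin hu]
    refine ⟨fun r hr => (D3 r).differentiableWithinAt, by simp, ?_⟩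
    refine ContDiffOn.congr ?_ (fun r hr => (D3 r).derivWithin (hu r hr))
    rw [contDiffOn_zero]
    exact cont4
  refine ⟨β, M, φ, ?_, hcd, ?_, ?_, ?_, ?_, ?_, ?_, ?_⟩
  · positivity
  · -- φ r = r^p + β for r ≥ 1
    intro r hr
    rcases eq_or_lt_of_le hr with h | h
    · simp only [hφ, ← h, if_pos le_rfl, Real.one_rpow, hβ]; ring
    · simp only [hφ, if_neg (not_le.mpr h)]
  · -- φ 0 = 0
    simp [hφ, st18q]
  · -- φ' 0 = 0
    rw [hd1 0 self_mem_Ici]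
    simp [hΦ1, st18H]
  · -- φ > 0
    intro r hr
    by_cases h : r ≤ 1
    · simp only [hφ, if_pos h]
      exact st18q_pos hp1 hp2 hr h
    · simp only [hφ, if_neg h]
      push_neg at h
      have h1 : (1:ℝ) ≤ r ^ p := by
        rw [← Real.one_rpow p]
        exact Real.rpow_le_rpow zero_le_one h.le hp0.le
      have hq1 : 0 < st18q p 1 := st18q_pos hp1 hp2 one_pos le_rfl
      simp only [hβ]; linarith
  · -- φ' > 0
    intro r hr
    rw [hd1 r (mem_Ici.mpr hr.le)]
    by_cases h : r ≤ 1
    · simp only [hΦ1, if_pos h]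
      exact st18H_pos hp1 hp2 hr h
    · simp only [hΦ1, if_neg h]
      push_neg at h
      exact mul_pos hp0 (Real.rpow_pos_of_pos (by linarith) _)
  · -- φ'' > 0
    intro r hr
    rw [hd2 r (mem_Ici.mpr hr)]
    by_cases h : r ≤ 1
    · simp only [hΦ2, if_pos h]
      exact st18h_pos hp1 hp2 hr h
    · simp only [hΦ2, if_neg h]
      push_neg at h
      exact mul_pos (by nlinarith) (Real.rpow_pos_of_pos (by linarith) _)
  · -- bound
    intro r hr
    rcases eq_or_lt_of_le hr with h | h
    · simp only [hφ, ← h, if_pos zero_le_one]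
      rw [Real.zero_rpow hp0.ne', mul_zero]
      simp [st18q]
    · by_cases h1 : r ≤ 1
      · simp only [hφ, if_pos h1]
        have hr2 : r ^ (2:ℝ) ≤ r ^ p := Real.rpow_le_rpow_of_exponent_ge h h1 (by linarith)
        have hr2' : r ^ (2:ℕ) = r ^ (2:ℝ) := (Real.rpow_natCast r 2).symm
        have hp3 : r^3 ≤ r^2 := pow_le_pow_of_le_one h.le h1 (by norm_num)
        have hp4 : r^4 ≤ r^2 := pow_le_pow_of_le_one h.le h1 (by norm_num)
        have hp5 : r^5 ≤ r^2 := pow_le_pow_of_le_one h.le h1 (by norm_num)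
        have hS : st18q p r ≤ (|st18c0 p| + |st18c1 p| + |st18c2 p| + |st18c3 p|) * r^2 := by
          simp only [st18q]
          have b0 : st18c0 p * r^2/2 ≤ |st18c0 p| * r^2 := by
            nlinarith [le_abs_self (st18c0 p), abs_nonneg (st18c0 p), sq_nonneg r,
              mul_nonneg (sub_nonneg.mpr (le_abs_self (st18c0 p))) (sq_nonneg r)]
          have b1 : st18c1 p * r^3/6 ≤ |st18c1 p| * r^2 := by
            nlinarith [mul_nonneg (sub_nonneg.mpr (le_abs_self (st18c1 p))) (pow_nonneg h.le 3),
              mul_le_mul_of_nonneg_left hp3 (abs_nonneg (st18c1 p)), mul_nonneg (abs_nonneg (st18c1 p)) (sq_nonneg r)]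
          have b2 : st18c2 p * r^4/12 ≤ |st18c2 p| * r^2 := by
            nlinarith [mul_nonneg (sub_nonneg.mpr (le_abs_self (st18c2 p))) (pow_nonneg h.le 4),
              mul_le_mul_of_nonneg_left hp4 (abs_nonneg (st18c2 p)), mul_nonneg (abs_nonneg (st18c2 p)) (sq_nonneg r)]
          have b3 : st18c3 p * r^5/20 ≤ |st18c3 p| * r^2 := by
            nlinarith [mul_nonneg (sub_nonneg.mpr (le_abs_self (st18c3 p))) (pow_nonneg h.le 5),
              mul_le_mul_of_nonneg_left hp5 (abs_nonneg (st18c3 p)), mul_nonneg (abs_nonneg (st18c3 p)) (sq_nonneg r)]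
          linarith
        have hrp : 0 ≤ r ^ p := (Real.rpow_pos_of_pos h p).le
        calc st18q p r ≤ (|st18c0 p| + |st18c1 p| + |st18c2 p| + |st18c3 p|) * r^2 := hS
          _ ≤ (|st18c0 p| + |st18c1 p| + |st18c2 p| + |st18c3 p|) * r ^ p := by
              rw [hr2']
              exact mul_le_mul_of_nonneg_left hr2 (by positivity)
          _ ≤ M * r ^ p := by
              refine mul_le_mul_of_nonneg_right ?_ hrp
              simp only [hM]
              have := abs_nonneg β
              linarith
      · simp only [hφ, if_neg h1]
        push_neg at h1
        have hrp1 : (1:ℝ) ≤ r ^ p := by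
          rw [← Real.one_rpow p]
          exact Real.rpow_le_rpow zero_le_one h1.le hp0.le
        have hb : β ≤ |β| := le_abs_self β
        have hM1 : |β| + 1 ≤ M := by
          simp only [hM]
          linarith [abs_nonneg (st18c0 p), abs_nonneg (st18c1 p), abs_nonneg (st18c2 p), abs_nonneg (st18c3 p)]
        nlinarith [abs_nonneg β, mul_le_mul_of_nonneg_left hrp1 (abs_nonneg β)]
end

section
/- There exist β ∈ ℝ, M > 0 and a four times continuously differentiable function φ : [0,∞) → ℝ such that: φ(r) = 3r − ∫₁^r dt/(1 + log t) + β for all r ≥ 1; φ(0) = 0 and φ′(0) = 0; φ(r) > 0 and φ′(r) > 0 for all r > 0; φ″(r) > 0 for all r ≥ 0; and φ(r) ≤ M r for all r ≥ 0. In particular, for r ≥ 1 one has φ′(r) = 3 − 1/(1 + log r) and φ″(r) = 1/(r(1 + log r)²). -/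
open Set

/-! ### Auxiliary construction: a quintic polynomial glued to `(1 + log t)⁻¹` at `t = 1` -/

noncomputable def q19 (s : ℝ) : ℝ :=
  1 - (s-1) + (3/2)*(s-1)^2 - (7/3)*(s-1)^3 - (77/6)*(s-1)^4 - 10*(s-1)^5
noncomputable def qd1 (s : ℝ) : ℝ :=
  -1 + 3*(s-1) - 7*(s-1)^2 - (154/3)*(s-1)^3 - 50*(s-1)^4
noncomputable def qd2 (s : ℝ) : ℝ := 3 - 14*(s-1) - 154*(s-1)^2 - 200*(s-1)^3
noncomputable def qd3 (s : ℝ) : ℝ := -14 - 308*(s-1) - 600*(s-1)^2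

lemma hasDerivAt_q19 (s : ℝ) : HasDerivAt q19 (qd1 s) s := by
  have h : HasDerivAt (fun s : ℝ => s - 1) 1 s := (hasDerivAt_id s).sub_const 1
  have H := ((((hasDerivAt_const s (1:ℝ)).sub h).add ((h.pow 2).const_mul (3/2))).sub
      ((h.pow 3).const_mul (7/3))).sub (((h.pow 4).const_mul (77/6)).add ((h.pow 5).const_mul 10))
  convert H using 1
  case e'_4 => rfl
  case e'_5 => rfl
  · ext x; unfold q19; simp only [Pi.add_apply, Pi.sub_apply, Pi.pow_apply]; ring
  · unfold qd1; ring

lemma hasDerivAt_qd1 (s : ℝ) : HasDerivAt qd1 (qd2 s) s := by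
  have h : HasDerivAt (fun s : ℝ => s - 1) 1 s := (hasDerivAt_id s).sub_const 1
  have H := (((hasDerivAt_const s (-1:ℝ)).add (h.const_mul 3)).sub ((h.pow 2).const_mul 7)).sub
      (((h.pow 3).const_mul (154/3)).add ((h.pow 4).const_mul 50))
  convert H using 1
  case e'_4 => rfl
  case e'_5 => rfl
  · ext x; unfold qd1; simp only [Pi.add_apply, Pi.sub_apply, Pi.pow_apply]; ring
  · unfold qd2; ring

lemma hasDerivAt_qd2 (s : ℝ) : HasDerivAt qd2 (qd3 s) s := by
  have h : HasDerivAt (fun s : ℝ => s - 1) 1 s := (hasDerivAt_id s).sub_const 1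
  have H := ((hasDerivAt_const s (3:ℝ)).sub (h.const_mul 14)).sub
      (((h.pow 2).const_mul 154).add ((h.pow 3).const_mul 200))
  convert H using 1
  case e'_4 => rfl
  case e'_5 => rfl
  · ext x; unfold qd2; simp only [Pi.add_apply, Pi.sub_apply, Pi.pow_apply]; ring
  · unfold qd3; ring

lemma qd1_neg {s : ℝ} (h0 : 0 ≤ s) (h1 : s ≤ 1) : qd1 s < 0 := by
  unfold qd1
  nlinarith [sq_nonneg (1-s), sq_nonneg s, mul_nonneg (sub_nonneg.2 h1) h0,
    sq_nonneg ((1-s)^2 - (1-s)), mul_nonneg (mul_nonneg (sub_nonneg.2 h1) (sub_nonneg.2 h1)) h0,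
    sq_nonneg (10*(1-s)^2 - 6*(1-s)), sq_nonneg (5*(1-s)^2-3*(1-s)-1)]

lemma q19_one : q19 1 = 1 := by norm_num [q19]
lemma q19_zero : q19 0 = 3 := by norm_num [q19]
lemma qd1_one : qd1 1 = -1 := by norm_num [qd1]
lemma qd2_one : qd2 1 = 3 := by norm_num [qd2]
lemma qd3_one : qd3 1 = -14 := by norm_num [qd3]

lemma q19_strictAnti : StrictAntiOn q19 (Icc 0 1) := by
  apply strictAntiOn_of_deriv_neg (convex_Icc 0 1)
  · exact fun x _ => (hasDerivAt_q19 x).continuousAt.continuousWithinAt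
  · intro x hx
    rw [interior_Icc] at hx
    rw [(hasDerivAt_q19 x).deriv]
    exact qd1_neg hx.1.le hx.2.le

/-! ### The smooth branch on `[1, ∞)` -/

noncomputable def H0 (t : ℝ) : ℝ := (1 + Real.log t)⁻¹
noncomputable def H1 (t : ℝ) : ℝ := -((t * (1 + Real.log t)^2)⁻¹)
noncomputable def H2 (t : ℝ) : ℝ :=
  ((1+Real.log t)^2 + 2*(1+Real.log t)) / (t * (1+Real.log t)^2)^2
noncomputable def H3 (t : ℝ) : ℝ :=
  ((2*(1+Real.log t)+2) * t⁻¹ * (t*(1+Real.log t)^2)^2 -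
    ((1+Real.log t)^2+2*(1+Real.log t)) *
      (2*(t*(1+Real.log t)^2)*((1+Real.log t)^2 + 2*(1+Real.log t)))) /
    ((t*(1+Real.log t)^2)^2)^2

section
variable {t : ℝ} (ht : 1 ≤ t)
include ht

lemma ht0 : (0:ℝ) < t := lt_of_lt_of_le one_pos ht
lemma hw_pos : 0 < 1 + Real.log t := by have := Real.log_nonneg ht; linarith
lemma hu_pos : 0 < t * (1+Real.log t)^2 := by
  have := hw_pos ht; have := ht0 ht; positivity

lemma hasDerivAt_w : HasDerivAt (fun t : ℝ => 1 + Real.log t) t⁻¹ t :=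
  (Real.hasDerivAt_log (ht0 ht).ne').const_add 1

lemma hasDerivAt_u : HasDerivAt (fun t : ℝ => t * (1+Real.log t)^2)
    ((1+Real.log t)^2 + 2*(1+Real.log t)) t := by
  have h := (hasDerivAt_id t).mul ((hasDerivAt_w ht).pow 2)
  convert h using 1
  case e'_4 => rfl
  case e'_5 => rfl
  case e'_8 => rfl
  have h0 := (ht0 ht).ne'
  simp only [Pi.pow_apply, id]
  field_simp
  norm_num
  ring

lemma hasDerivAt_H0 : HasDerivAt H0 (H1 t) t := by
  have h := (hasDerivAt_w ht).inv (hw_pos ht).ne'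
  convert h using 1
  case e'_4 => rfl
  case e'_5 => rfl
  case e'_8 => rfl
  have h0 := (ht0 ht).ne'
  unfold H1
  field_simp

lemma hasDerivAt_H1 : HasDerivAt H1 (H2 t) t := by
  have h := ((hasDerivAt_u ht).inv (hu_pos ht).ne').neg
  convert h using 1
  case e'_4 => rfl
  case e'_5 => rfl
  case e'_8 => rfl
  unfold H2
  field_simp

lemma hasDerivAt_N : HasDerivAt (fun t : ℝ => (1+Real.log t)^2 + 2*(1+Real.log t))
    ((2*(1+Real.log t)+2) * t⁻¹) t := by
  have h := ((hasDerivAt_w ht).pow 2).add ((hasDerivAt_w ht).const_mul 2)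
  convert h using 1
  case e'_4 => rfl
  case e'_5 => rfl
  case e'_8 => rfl
  ring

lemma hasDerivAt_D : HasDerivAt (fun t : ℝ => (t*(1+Real.log t)^2)^2)
    (2*(t*(1+Real.log t)^2)*((1+Real.log t)^2 + 2*(1+Real.log t))) t := by
  have h := (hasDerivAt_u ht).pow 2
  convert h using 1
  case e'_4 => rfl
  case e'_5 => rfl
  case e'_8 => rfl
  ring

lemma hasDerivAt_H2 : HasDerivAt H2 (H3 t) t := by
  have hD0 : ((t*(1+Real.log t)^2)^2 : ℝ) ≠ 0 := by
    have := hu_pos ht; positivity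
  exact (hasDerivAt_N ht).div (hasDerivAt_D ht) hD0

lemma continuousAt_H3 : ContinuousAt H3 t := by
  have h0 := (ht0 ht).ne'
  have hlog : ContinuousAt Real.log t := Real.continuousAt_log h0
  have hw : ContinuousAt (fun t : ℝ => 1 + Real.log t) t := continuousAt_const.add hlog
  have hu : ContinuousAt (fun t : ℝ => t * (1+Real.log t)^2) t :=
    continuousAt_id.mul (hw.pow 2)
  have hN : ContinuousAt (fun t : ℝ => (1+Real.log t)^2 + 2*(1+Real.log t)) t :=
    (hw.pow 2).add (hw.const_mul 2)
  have hinv : ContinuousAt (fun t : ℝ => t⁻¹) t := continuousAt_id.inv₀ h0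
  exact ContinuousAt.div
    ((((hw.const_mul 2).add continuousAt_const).mul hinv).mul (hu.pow 2) |>.sub
      (hN.mul ((hu.const_mul 2).mul hN)))
    ((hu.pow 2).pow 2) (by have := hu_pos ht; positivity)

end

lemma H0_one : H0 1 = 1 := by norm_num [H0, Real.log_one]
lemma H1_one : H1 1 = -1 := by norm_num [H1, Real.log_one]
lemma H2_one : H2 1 = 3 := by norm_num [H2, Real.log_one]
lemma H3_one : H3 1 = -14 := by norm_num [H3, Real.log_one]

/-! ### Gluing lemmas -/

lemma glue_hasDerivAt {A B A' B' : ℝ → ℝ}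
    (hA : ∀ t, HasDerivAt A (A' t) t)
    (hB : ∀ t, 1 ≤ t → HasDerivAt B (B' t) t)
    (hval : A 1 = B 1) (hder : A' 1 = B' 1) (t : ℝ) :
    HasDerivAt (fun x => if x ≤ 1 then A x else B x)
      (if t ≤ 1 then A' t else B' t) t := by
  rcases lt_trichotomy t 1 with h | h | h
  · rw [if_pos h.le]
    apply (hA t).congr_of_eventuallyEq
    filter_upwards [Iio_mem_nhds h] with x hx
    exact if_pos (le_of_lt hx)
  · subst h
    rw [if_pos le_rfl]
    have hleft : HasDerivWithinAt (fun x => if x ≤ 1 then A x else B x) (A' 1) (Iic 1) 1 := by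
      apply ((hA 1).hasDerivWithinAt).congr
      · intro x hx; exact if_pos hx
      · exact if_pos le_rfl
    have hright : HasDerivWithinAt (fun x => if x ≤ 1 then A x else B x) (A' 1) (Ici 1) 1 := by
      rw [hder]
      apply ((hB 1 le_rfl).hasDerivWithinAt).congr
      · intro x hx
        rcases eq_or_lt_of_le (mem_Ici.1 hx : (1:ℝ) ≤ x) with rfl | hx'
        · simpa using hval
        · exact if_neg (not_le.2 hx')
      · simpa using hval
    have hu := hleft.union hright
    rw [Iic_union_Ici] at hu
    exact hu.hasDerivAt (by simp)
  · rw [if_neg (not_le.2 h)]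
    apply (hB t h.le).congr_of_eventuallyEq
    filter_upwards [Ioi_mem_nhds h] with x hx
    exact if_neg (not_le.2 hx)

lemma glue_continuous {A B : ℝ → ℝ} (hA : Continuous A)
    (hB : ∀ t, 1 ≤ t → ContinuousAt B t) (hval : A 1 = B 1) :
    Continuous (fun x => if x ≤ 1 then A x else B x) := by
  rw [continuous_iff_continuousAt]
  intro t
  rcases lt_trichotomy t 1 with h | h | h
  · apply hA.continuousAt.congr
    filter_upwards [Iio_mem_nhds h] with x hx
    exact (if_pos (le_of_lt hx)).symm
  · subst h
    have hleft : ContinuousWithinAt (fun x => if x ≤ 1 then A x else B x) (Iic 1) 1 := by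
      apply hA.continuousAt.continuousWithinAt.congr
      · intro x hx; exact if_pos hx
      · exact if_pos le_rfl
    have hright : ContinuousWithinAt (fun x => if x ≤ 1 then A x else B x) (Ici 1) 1 := by
      apply ((hB 1 le_rfl).continuousWithinAt).congr
      · intro x hx
        rcases eq_or_lt_of_le (mem_Ici.1 hx : (1:ℝ) ≤ x) with rfl | hx'
        · simpa using hval
        · exact if_neg (not_le.2 hx')
      · simpa using hval
    have hu := hleft.union hright
    rwa [Iic_union_Ici, continuousWithinAt_univ] at hu
  · apply (hB t h.le).congr
    filter_upwards [Ioi_mem_nhds h] with x hx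
    exact (if_neg (not_le.2 hx)).symm

/-! ### The glued functions -/

noncomputable def F0 (t : ℝ) : ℝ := if t ≤ 1 then q19 t else H0 t
noncomputable def F1 (t : ℝ) : ℝ := if t ≤ 1 then qd1 t else H1 t
noncomputable def F2 (t : ℝ) : ℝ := if t ≤ 1 then qd2 t else H2 t
noncomputable def F3 (t : ℝ) : ℝ := if t ≤ 1 then qd3 t else H3 t

lemma hasDerivAt_F0 (t : ℝ) : HasDerivAt F0 (F1 t) t :=
  glue_hasDerivAt hasDerivAt_q19 (fun _ ht => hasDerivAt_H0 ht)
    (q19_one.trans H0_one.symm) (qd1_one.trans H1_one.symm) t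

lemma hasDerivAt_F1 (t : ℝ) : HasDerivAt F1 (F2 t) t :=
  glue_hasDerivAt hasDerivAt_qd1 (fun _ ht => hasDerivAt_H1 ht)
    (qd1_one.trans H1_one.symm) (qd2_one.trans H2_one.symm) t

lemma hasDerivAt_F2 (t : ℝ) : HasDerivAt F2 (F3 t) t :=
  glue_hasDerivAt hasDerivAt_qd2 (fun _ ht => hasDerivAt_H2 ht)
    (qd2_one.trans H2_one.symm) (qd3_one.trans H3_one.symm) t

lemma continuous_F3 : Continuous F3 :=
  glue_continuous (by unfold qd3; continuity) (fun _ ht => continuousAt_H3 ht)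
    (qd3_one.trans H3_one.symm)

lemma continuous_F0 : Continuous F0 := by
  rw [continuous_iff_continuousAt]
  exact fun t => (hasDerivAt_F0 t).continuousAt

lemma dW_F0 : ∀ t ∈ Ici (0:ℝ), derivWithin F0 (Ici 0) t = F1 t := fun t ht =>
  (hasDerivAt_F0 t).hasDerivWithinAt.derivWithin (uniqueDiffOn_Ici 0 t ht)
lemma dW_F1 : ∀ t ∈ Ici (0:ℝ), derivWithin F1 (Ici 0) t = F2 t := fun t ht =>
  (hasDerivAt_F1 t).hasDerivWithinAt.derivWithin (uniqueDiffOn_Ici 0 t ht)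
lemma dW_F2 : ∀ t ∈ Ici (0:ℝ), derivWithin F2 (Ici 0) t = F3 t := fun t ht =>
  (hasDerivAt_F2 t).hasDerivWithinAt.derivWithin (uniqueDiffOn_Ici 0 t ht)

lemma contDiffOn_F0 : ContDiffOn ℝ 3 F0 (Ici 0) := by
  rw [show (3 : WithTop ℕ∞) = 2 + 1 by norm_num,
    contDiffOn_succ_iff_derivWithin (uniqueDiffOn_Ici 0)]
  refine ⟨fun t _ => (hasDerivAt_F0 t).differentiableAt.differentiableWithinAt, by simp, ?_⟩
  refine ContDiffOn.congr ?_ dW_F0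
  rw [show (2 : WithTop ℕ∞) = 1 + 1 by norm_num,
    contDiffOn_succ_iff_derivWithin (uniqueDiffOn_Ici 0)]
  refine ⟨fun t _ => (hasDerivAt_F1 t).differentiableAt.differentiableWithinAt, by simp, ?_⟩
  refine ContDiffOn.congr ?_ dW_F1
  rw [show (1 : WithTop ℕ∞) = 0 + 1 by norm_num,
    contDiffOn_succ_iff_derivWithin (uniqueDiffOn_Ici 0)]
  refine ⟨fun t _ => (hasDerivAt_F2 t).differentiableAt.differentiableWithinAt, by simp, ?_⟩
  refine ContDiffOn.congr ?_ dW_F2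
  rw [contDiffOn_zero]
  exact continuous_F3.continuousOn

lemma F0_of_ge {t : ℝ} (ht : 1 ≤ t) : F0 t = (1 + Real.log t)⁻¹ := by
  rcases eq_or_lt_of_le ht with rfl | h
  · rw [F0, if_pos le_rfl, q19_one]; norm_num [Real.log_one]
  · rw [F0, if_neg (not_le.2 h)]; rfl

lemma F1_of_ge {t : ℝ} (ht : 1 ≤ t) : F1 t = -((t * (1 + Real.log t)^2)⁻¹) := by
  rcases eq_or_lt_of_le ht with rfl | h
  · rw [F1, if_pos le_rfl, qd1_one]; norm_num [Real.log_one]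
  · rw [F1, if_neg (not_le.2 h)]; rfl

lemma F0_nonneg {t : ℝ} (h0 : 0 ≤ t) : 0 ≤ F0 t := by
  rw [F0]
  split_ifs with h
  · rcases eq_or_lt_of_le h with rfl | h'
    · rw [q19_one]; norm_num
    · have := q19_strictAnti ⟨h0, h⟩ ⟨zero_le_one, le_rfl⟩ h'
      rw [q19_one] at this; linarith
  · have := hw_pos (le_of_lt (not_le.1 h))
    rw [H0]
    positivity

lemma F0_lt_three {t : ℝ} (h0 : 0 < t) : F0 t < 3 := by
  rw [F0]
  split_ifs with h
  · have := q19_strictAnti ⟨le_rfl, zero_le_one⟩ ⟨h0.le, h⟩ h0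
    rw [q19_zero] at this; linarith
  · have h1 : 1 ≤ 1 + Real.log t := by
      have := Real.log_nonneg (le_of_lt (not_le.1 h)); linarith
    have := inv_le_one_of_one_le₀ h1
    rw [H0]
    linarith

lemma F1_neg {t : ℝ} (h0 : 0 ≤ t) : F1 t < 0 := by
  rw [F1]
  split_ifs with h
  · exact qd1_neg h0 h
  · have ht : (1:ℝ) ≤ t := le_of_lt (not_le.1 h)
    have h2 : 0 < (t * (1 + Real.log t)^2)⁻¹ := inv_pos.2 (hu_pos ht)
    rw [H1]
    linarith

/-! ### Main theorem -/

/-- existence of the convex Carleman weight with asymptotically linear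
growth, equal to `3r − ∫₁^r dt/(1 + log t) + β` for `r ≥ 1`. -/
theorem statement19 :
    ∃ (β M : ℝ) (φ : ℝ → ℝ), 0 < M ∧
      -- φ is four times continuously differentiable on [0,∞)
      ContDiffOn ℝ 4 φ (Set.Ici 0) ∧
      -- φ(r) = 3r − ∫₁^r dt/(1 + log t) + β for r ≥ 1
      (∀ r : ℝ, 1 ≤ r → φ r = 3 * r - (∫ t in (1:ℝ)..r, (1 + Real.log t)⁻¹) + β) ∧
      -- φ(0) = 0 and φ′(0) = 0 (one-sided derivative at 0)
      φ 0 = 0 ∧ derivWithin φ (Set.Ici 0) 0 = 0 ∧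
      -- φ(r) > 0 and φ′(r) > 0 for r > 0
      (∀ r : ℝ, 0 < r → 0 < φ r) ∧
      (∀ r : ℝ, 0 < r → 0 < derivWithin φ (Set.Ici 0) r) ∧
      -- φ″(r) > 0 for r ≥ 0
      (∀ r : ℝ, 0 ≤ r → 0 < derivWithin (derivWithin φ (Set.Ici 0)) (Set.Ici 0) r) ∧
      -- φ(r) ≤ M r for r ≥ 0
      (∀ r : ℝ, 0 ≤ r → φ r ≤ M * r) ∧
      -- in particular, for r ≥ 1, φ′(r) = 3 − 1/(1 + log r)
      (∀ r : ℝ, 1 ≤ r → derivWithin φ (Set.Ici 0) r = 3 - (1 + Real.log r)⁻¹) ∧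
      -- and φ″(r) = 1/(r(1 + log r)²)
      (∀ r : ℝ, 1 ≤ r →
        derivWithin (derivWithin φ (Set.Ici 0)) (Set.Ici 0) r
          = (r * (1 + Real.log r)^2)⁻¹) := by
  set φ : ℝ → ℝ := fun r => ∫ t in (0:ℝ)..r, (3 - F0 t) with hφ
  have hgc : Continuous (fun t : ℝ => 3 - F0 t) := continuous_const.sub continuous_F0
  have hφd : ∀ r : ℝ, HasDerivAt φ (3 - F0 r) r := fun r =>
    (hgc.integral_hasStrictDerivAt 0 r).hasDerivAt
  have hD1 : ∀ r ∈ Ici (0:ℝ), derivWithin φ (Ici 0) r = 3 - F0 r := fun r hr =>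
    (hφd r).hasDerivWithinAt.derivWithin (uniqueDiffOn_Ici 0 r hr)
  have hD2 : ∀ r ∈ Ici (0:ℝ), derivWithin (derivWithin φ (Ici 0)) (Ici 0) r = -(F1 r) := by
    intro r hr
    rw [derivWithin_congr hD1 (hD1 r hr)]
    exact (((hasDerivAt_F0 r).const_sub 3).hasDerivWithinAt).derivWithin
      (uniqueDiffOn_Ici 0 r hr)
  have hgpos : ∀ r : ℝ, 0 < r → 0 < 3 - F0 r := fun r hr => by
    have := F0_lt_three hr; linarith
  have hφ0 : φ 0 = 0 := intervalIntegral.integral_same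
  refine ⟨(∫ t in (0:ℝ)..1, (3 - F0 t)) - 3, 3, φ, by norm_num, ?_, ?_, hφ0, ?_, ?_, ?_, ?_,
    ?_, ?_, ?_⟩
  · -- ContDiffOn ℝ 4
    rw [show (4 : WithTop ℕ∞) = 3 + 1 by norm_num,
      contDiffOn_succ_iff_derivWithin (uniqueDiffOn_Ici 0)]
    refine ⟨fun t _ => (hφd t).differentiableAt.differentiableWithinAt, by simp, ?_⟩
    exact ContDiffOn.congr (contDiffOn_const.sub contDiffOn_F0) hD1
  · -- formula for r ≥ 1
    intro r hr
    have h1 : IntervalIntegrable (fun t => 3 - F0 t) MeasureTheory.volume 0 1 :=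
      hgc.intervalIntegrable 0 1
    have h2 : IntervalIntegrable (fun t => 3 - F0 t) MeasureTheory.volume 1 r :=
      hgc.intervalIntegrable 1 r
    have hH0int : IntervalIntegrable (fun t : ℝ => (1 + Real.log t)⁻¹)
        MeasureTheory.volume 1 r := by
      apply ContinuousOn.intervalIntegrable
      rw [uIcc_of_le hr]
      refine ContinuousOn.inv₀ (continuousOn_const.add (Real.continuousOn_log.mono ?_)) ?_
      · intro x hx
        simp only [mem_compl_iff, mem_singleton_iff]
        exact (lt_of_lt_of_le one_pos hx.1).ne'
      · exact fun x hx => (hw_pos hx.1).ne'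
    have hsplit : φ r = (∫ t in (0:ℝ)..1, (3 - F0 t)) + ∫ t in (1:ℝ)..r, (3 - F0 t) :=
      (intervalIntegral.integral_add_adjacent_intervals h1 h2).symm
    have hcong : (∫ t in (1:ℝ)..r, (3 - F0 t))
        = ∫ t in (1:ℝ)..r, (3 - (1 + Real.log t)⁻¹) := by
      apply intervalIntegral.integral_congr
      intro x hx
      rw [uIcc_of_le hr] at hx
      show 3 - F0 x = 3 - (1 + Real.log x)⁻¹
      rw [F0_of_ge hx.1]
    have hsub : (∫ t in (1:ℝ)..r, (3 - (1 + Real.log t)⁻¹))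
        = (∫ _ in (1:ℝ)..r, (3:ℝ)) - ∫ t in (1:ℝ)..r, (1 + Real.log t)⁻¹ :=
      intervalIntegral.integral_sub intervalIntegrable_const hH0int
    rw [hsplit, hcong, hsub, intervalIntegral.integral_const]
    simp only [smul_eq_mul]
    ring
  · -- derivWithin φ at 0 = 0
    rw [hD1 0 self_mem_Ici]
    have : F0 0 = 3 := by rw [F0, if_pos (by norm_num : (0:ℝ) ≤ 1)]; exact q19_zero
    rw [this]; ring
  · -- φ > 0 for r > 0
    intro r hr
    have hmono : StrictMonoOn φ (Ici 0) := by
      apply strictMonoOn_of_deriv_pos (convex_Ici 0)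
      · exact fun x _ => (hφd x).continuousAt.continuousWithinAt
      · intro x hx
        rw [interior_Ici] at hx
        rw [(hφd x).deriv]
        exact hgpos x hx
    have := hmono self_mem_Ici (mem_Ici.2 hr.le) hr
    rwa [hφ0] at this
  · -- φ' > 0 for r > 0
    intro r hr
    rw [hD1 r (mem_Ici.2 hr.le)]
    exact hgpos r hr
  · -- φ'' > 0 for r ≥ 0
    intro r hr
    rw [hD2 r (mem_Ici.2 hr)]
    have := F1_neg (mem_Ici.1 hr)
    linarith
  · -- φ ≤ 3 r
    intro r hr
    have : φ r ≤ ∫ _ in (0:ℝ)..r, (3:ℝ) := by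
      apply intervalIntegral.integral_mono_on hr (hgc.intervalIntegrable 0 r)
        intervalIntegrable_const
      intro x hx
      have := F0_nonneg hx.1
      linarith
    rw [intervalIntegral.integral_const] at this
    simp only [smul_eq_mul] at this
    linarith
  · -- φ' formula for r ≥ 1
    intro r hr
    rw [hD1 r (mem_Ici.2 (le_trans zero_le_one hr)), F0_of_ge hr]
  · -- φ'' formula for r ≥ 1
    intro r hr
    rw [hD2 r (mem_Ici.2 (le_trans zero_le_one hr)), F1_of_ge hr, neg_neg]
end
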